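/- For distinct indices i, j, j′ with i ≠ j, i ≠ j′, j ≠ j′, and a ∈ A, α ∈ I, β ∈ J, one has [e_{i,j′}(α), e_{i,j}(a) e_{j,i}(β) e_{i,j}(a)⁻¹] = e_{i,j}(a) e_{j,j′}(−βα) e_{i,j}(a)⁻¹. -/

import Mathlib

private lemma grp_aux {G : Type*} [Group G] (x y z w : G)
    (h1 : x * y = y * x) (h2 : y * z = w * (z * y)) :
    y * (x * z * x⁻¹) * y⁻¹ * (x * z * x⁻¹)⁻¹ = x * w * x⁻¹ := by
  have c : Commute x y := h1
  have hconj : x * y * x⁻¹ = y := by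
    rw [h1, mul_assoc, mul_inv_cancel, mul_one]
  have hw : w = y * z * y⁻¹ * z⁻¹ := by
    rw [h2]; group
  calc y * (x * z * x⁻¹) * y⁻¹ * (x * z * x⁻¹)⁻¹
      = (x * y * x⁻¹) * (x * z * x⁻¹) * (x * y * x⁻¹)⁻¹ * (x * z * x⁻¹)⁻¹ := by
        rw [hconj]
    _ = x * (y * z * y⁻¹ * z⁻¹) * x⁻¹ := by group
    _ = x * w * x⁻¹ := by rw [← hw]

theorem commutator_case_two {n : ℕ} {A : Type*} [Ring A]
    (I J : TwoSidedIdeal A) (i j j' : Fin n)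
    (hij : i ≠ j) (hij' : i ≠ j') (hjj' : j ≠ j')
    (a : A) (α : A) (hα : α ∈ I) (β : A) (hβ : β ∈ J)
    (x y z w : (Matrix (Fin n) (Fin n) A)ˣ)
    (hx : x.val = 1 + Matrix.single i j a)
    (hy : y.val = 1 + Matrix.single i j' α)
    (hz : z.val = 1 + Matrix.single j i β)
    (hw : w.val = 1 + Matrix.single j j' (-(β * α))) :
    y * (x * z * x⁻¹) * y⁻¹ * (x * z * x⁻¹)⁻¹ = x * w * x⁻¹ := by
  apply grp_aux
  · apply Units.ext
    show x.val * y.val = y.val * x.val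
    rw [hx, hy]
    simp only [mul_add, add_mul, one_mul, mul_one,
      Matrix.single_mul_single_of_ne _ _ _ _ hij.symm,
      Matrix.single_mul_single_of_ne _ _ _ _ hij'.symm,
      add_zero]
    abel
  · apply Units.ext
    show y.val * z.val = w.val * (z.val * y.val)
    rw [hy, hz, hw]
    simp only [mul_add, add_mul, one_mul, mul_one,
      Matrix.single_mul_single_same,
      Matrix.single_mul_single_of_ne _ _ _ _ hjj'.symm,
      Matrix.single_mul_single_of_ne _ _ _ _ hjj',
      Matrix.single_mul_single_of_ne _ _ _ _ hij'.symm,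
      add_zero, zero_add]
    rw [show Matrix.single j j' (-(β * α)) = -Matrix.single j j' (β * α) by
      apply eq_neg_of_add_eq_zero_left
      rw [← Matrix.single_add, neg_add_cancel, Matrix.single_zero]]
    abel
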